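/- Let n ≥ 50k ln k, k ≥ 50, and set r = ln k. Then for any family G ⊆ binom([2,n], n-k-1) with |G| = C(x, n-k-1) where x ≤ n - r (generalized binomial), one has |G| / |∂^{k-1} G| ≤ C(x, n-k-1)/C(x, k-1) < k^{-2}. -/

import Mathlib

open Finset

set_option maxHeartbeats 1000000

def levShadow (j : ℕ) (G : Finset (Finset ℕ)) : Finset (Finset ℕ) :=
  G.biUnion fun A => A.powersetCard j

noncomputable def genChoose (x : ℝ) (k : ℕ) : ℝ :=
  (∏ i ∈ Finset.range k, (x - i)) / (Nat.factorial k)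

namespace KKaux

lemma genChoose_zero (x : ℝ) : genChoose x 0 = 1 := by simp [genChoose]

lemma factor_pos {x : ℝ} {k : ℕ} (h : (k:ℝ) - 1 < x) {i : ℕ} (hi : i < k) : 0 < x - i := by
  have : (i:ℝ) ≤ (k:ℝ) - 1 := by
    have : (i:ℝ) + 1 ≤ k := by exact_mod_cast hi
    linarith
  linarith

lemma genChoose_pos {x : ℝ} {k : ℕ} (h : (k:ℝ) - 1 < x) : 0 < genChoose x k := by
  apply div_pos
  · exact Finset.prod_pos fun i hi => factor_pos h (Finset.mem_range.1 hi)
  · exact_mod_cast Nat.factorial_pos k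

lemma genChoose_nonneg {x : ℝ} {k : ℕ} (h : (k:ℝ) - 1 ≤ x) : 0 ≤ genChoose x k := by
  rcases eq_or_lt_of_le h with h' | h'
  · rcases Nat.eq_zero_or_pos k with rfl | hk
    · simp [genChoose]
    · have hz : x - ((k-1:ℕ):ℝ) = 0 := by
        push_cast [Nat.cast_sub hk]; linarith
      apply le_of_eq
      rw [genChoose, Finset.prod_eq_zero (i := k-1) (by simp [Nat.sub_lt hk]) hz, zero_div]
  · exact (genChoose_pos h').le

lemma genChoose_mono {x y : ℝ} {k : ℕ} (hx : (k:ℝ) - 1 ≤ x) (hxy : x ≤ y) :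
    genChoose x k ≤ genChoose y k := by
  unfold genChoose
  apply div_le_div_of_nonneg_right ?_ (by positivity)
  apply Finset.prod_le_prod
  · intro i hi
    have hi' := Finset.mem_range.1 hi
    have : (i:ℝ) ≤ (k:ℝ) - 1 := by
      have : (i:ℝ) + 1 ≤ k := by exact_mod_cast hi'
      linarith
    linarith
  · intro i _; linarith

lemma pascal (x : ℝ) (r : ℕ) :
    genChoose x (r+1) = genChoose (x-1) (r+1) + genChoose (x-1) r := by
  have h1 : ∏ i ∈ Finset.range (r+1), (x - i) = x * ∏ i ∈ Finset.range r, (x - 1 - i) := by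
    rw [Finset.prod_range_succ']
    simp only [Nat.cast_zero, sub_zero]
    rw [mul_comm]
    congr 1
    apply Finset.prod_congr rfl
    intro i _
    push_cast; ring
  have h2 : ∏ i ∈ Finset.range (r+1), (x - 1 - i) = (∏ i ∈ Finset.range r, (x - 1 - i)) * (x - 1 - r) := Finset.prod_range_succ _ _
  have hf : ((r+1).factorial : ℝ) = (r+1) * r.factorial := by
    push_cast [Nat.factorial_succ]; ring
  rw [genChoose, genChoose, genChoose, h1, h2, hf]
  have hfac : (r.factorial : ℝ) ≠ 0 := by exact_mod_cast (Nat.factorial_pos r).ne'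
  field_simp
  ring

end KKaux

namespace KKaux2
open KKaux

lemma prod_natCast (m j : ℕ) (h : j ≤ m) :
    ∏ i ∈ Finset.range j, ((m:ℝ) - i) = (m.descFactorial j : ℝ) := by
  induction j with
  | zero => simp
  | succ j ih =>
    rw [Finset.prod_range_succ, ih (by omega), Nat.descFactorial_succ]
    have : ((m - j : ℕ) : ℝ) = (m:ℝ) - j := by
      rw [Nat.cast_sub (by omega)]
    push_cast [Nat.cast_sub (show j ≤ m by omega)]
    ring

lemma genChoose_natCast (m j : ℕ) (h : j ≤ m) : genChoose (m:ℝ) j = m.choose j := by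
  rw [genChoose, prod_natCast m j h, Nat.descFactorial_eq_factorial_mul_choose]
  push_cast
  rw [mul_comm, mul_div_assoc, div_self (by exact_mod_cast (Nat.factorial_pos j).ne'), mul_one]

/-- bottom `m` elements of a finset in a linear order -/
lemma exists_bottom {β : Type*} [LinearOrder β] [DecidableEq β] (s : Finset β) :
    ∀ m, m ≤ s.card →
      ∃ t, t ⊆ s ∧ t.card = m ∧ ∀ a ∈ t, ∀ b ∈ s, b ≤ a → b ∈ t := by
  intro m
  induction m with
  | zero => exact fun _ => ⟨∅, by simp⟩
  | succ m ih =>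
    intro hm
    obtain ⟨t, hts, htc, hlow⟩ := ih (by omega)
    have hne : (s \ t).Nonempty := by
      rw [← Finset.card_pos, Finset.card_sdiff_of_subset hts]
      omega
    set c := (s \ t).min' hne with hc
    have hcs : c ∈ s \ t := Finset.min'_mem _ hne
    refine ⟨insert c t, ?_, ?_, ?_⟩
    · exact Finset.insert_subset (Finset.mem_sdiff.1 hcs).1 hts
    · rw [Finset.card_insert_of_notMem (Finset.mem_sdiff.1 hcs).2, htc]
    · intro a ha b hb hba
      rcases Finset.mem_insert.1 ha with rfl | ha
      · by_cases hbt : b ∈ t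
        · exact Finset.mem_insert_of_mem hbt
        · have : c ≤ b := Finset.min'_le _ _ (Finset.mem_sdiff.2 ⟨hb, hbt⟩)
          have : b = c := le_antisymm hba this
          simp [this]
      · exact Finset.mem_insert_of_mem (hlow a ha b hb hba)

open Finset.Colex in
/-- initial segment of colex of any prescribed size -/
lemma exists_isInitSeg {N r : ℕ} (𝒜 : Finset (Finset (Fin N)))
    (h : (𝒜 : Set (Finset (Fin N))).Sized r) :
    ∃ 𝒞 : Finset (Finset (Fin N)), 𝒞.card = 𝒜.card ∧ IsInitSeg 𝒞 r := by
  classical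
  set S : Finset (Finset (Fin N)) := Finset.univ.powersetCard r with hS
  have h𝒜S : 𝒜 ⊆ S := fun A hA => by
    rw [hS, Finset.mem_powersetCard]
    exact ⟨Finset.subset_univ _, h hA⟩
  set S' : Finset (Colex (Finset (Fin N))) := S.image toColex with hS'
  have hcard : S'.card = S.card := Finset.card_image_of_injective _ (fun a b => by
    simpa using toColex_inj.1)
  obtain ⟨t, hts, htc, hlow⟩ := exists_bottom S' 𝒜.card (by
    rw [hcard]; exact Finset.card_le_card h𝒜S)
  refine ⟨S.filter (fun A => toColex A ∈ t), ?_, ?_, ?_⟩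
  · rw [← htc]
    apply Finset.card_nbij (fun A => toColex A)
    · intro A hA
      exact (Finset.mem_filter.1 hA).2
    · intro A hA B hB hAB
      exact toColex_inj.1 hAB
    · intro c hc
      obtain ⟨A, hA, rfl⟩ := Finset.mem_image.1 (hts hc)
      exact ⟨A, Finset.mem_filter.2 ⟨hA, hc⟩, rfl⟩
  · intro A hA
    exact (Finset.mem_powersetCard.1 (Finset.mem_filter.1 hA).1).2
  · rintro A B hA ⟨hBA, hBr⟩
    have hBS : B ∈ S := by
      rw [hS, Finset.mem_powersetCard]; exact ⟨Finset.subset_univ _, hBr⟩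
    refine Finset.mem_filter.2 ⟨hBS, ?_⟩
    exact hlow _ (Finset.mem_filter.1 hA).2 _ (Finset.mem_image_of_mem _ hBS) hBA.le

end KKaux2

namespace KKaux3
open KKaux KKaux2 FinsetFamily Finset

lemma card_le_shadow_card {N : ℕ} {𝒜 : Finset (Finset (Fin N))} {A : Finset (Fin N)}
    (hA : A ∈ 𝒜) : A.card ≤ (∂ 𝒜).card := by
  classical
  have hsub : A.image A.erase ⊆ ∂ 𝒜 := by
    intro t ht
    obtain ⟨a, ha, rfl⟩ := Finset.mem_image.1 ht
    exact Finset.mem_shadow_iff.2 ⟨A, hA, a, ha, rfl⟩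
  calc A.card = (A.image A.erase).card := (Finset.card_image_of_injOn (Finset.erase_injOn A)).symm
    _ ≤ _ := Finset.card_le_card hsub

lemma realKK (M : ℕ) : ∀ (r N : ℕ) (𝒜 : Finset (Finset (Fin N))) (x : ℝ),
    r + 𝒜.card ≤ M → 1 ≤ r → (𝒜 : Set (Finset (Fin N))).Sized r → 𝒜.Nonempty →
    (r:ℝ) - 1 ≤ x → genChoose x r ≤ (𝒜.card : ℝ) →
    genChoose x (r-1) ≤ ((∂ 𝒜).card : ℝ) := by
  induction M with
  | zero =>
    intro r N 𝒜 x hM hr _ hne _ _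
    exact absurd hM (by have := Finset.card_pos.2 hne; omega)
  | succ M ih =>
    intro r N 𝒜 x hM hr hsized hne hx hcard
    obtain ⟨u', rfl⟩ : ∃ u', r = u' + 1 := ⟨r - 1, by omega⟩
    rcases Nat.eq_zero_or_pos u' with rfl | hu'
    · have hmem : (∅ : Finset (Fin N)) ∈ ∂ 𝒜 := by
        obtain ⟨A, hA⟩ := hne
        have hAc : A.card = 1 := hsized hA
        obtain ⟨a, rfl⟩ := Finset.card_eq_one.1 hAc
        exact Finset.mem_shadow_iff.2 ⟨{a}, hA, a, by simp, by simp⟩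
      have h1 : 1 ≤ (∂ 𝒜).card := Finset.card_pos.2 ⟨∅, hmem⟩
      simpa [genChoose_zero] using (by exact_mod_cast h1 : (1:ℝ) ≤ ((∂ 𝒜).card:ℝ))
    by_cases hxr : x ≤ ((u'+1 : ℕ):ℝ)
    · obtain ⟨A, hA⟩ := hne
      have h1 : (u'+1 : ℕ) ≤ (∂ 𝒜).card := (hsized hA) ▸ card_le_shadow_card hA
      have h2 : genChoose x (u'+1-1) ≤ genChoose ((u'+1:ℕ):ℝ) u' := by
        simpa using genChoose_mono (k := u') (by push_cast at hx ⊢; linarith) hxr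
      calc genChoose x (u'+1-1) ≤ genChoose ((u'+1:ℕ):ℝ) u' := h2
        _ = ((u'+1).choose u' : ℝ) := genChoose_natCast _ _ (by omega)
        _ = ((u'+1 : ℕ) : ℝ) := by rw [Nat.choose_succ_self_right]
        _ ≤ _ := by exact_mod_cast h1
    · push_neg at hxr
      classical
      obtain ⟨𝒞, h𝒞card, h𝒞init⟩ := exists_isInitSeg 𝒜 hsized
      have h𝒞sized := h𝒞init.1
      have h𝒞ne : 𝒞.Nonempty := Finset.card_pos.1 (h𝒞card ▸ Finset.card_pos.2 hne)
      have hshadow : (∂ 𝒞).card ≤ (∂ 𝒜).card := by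
        have h := Finset.kruskal_katona (n := N) hsized (le_of_eq h𝒞card) h𝒞init
        convert h using 3
      suffices hS : genChoose x (u'+1-1) ≤ ((∂ 𝒞).card : ℝ) by
        exact hS.trans (by exact_mod_cast hshadow)
      have hN : 0 < N := by
        obtain ⟨A, hA⟩ := h𝒞ne
        have hAne : A.Nonempty := Finset.card_pos.1 (by rw [h𝒞sized hA]; omega)
        obtain ⟨a, _⟩ := hAne
        exact a.pos
      set z : Fin N := ⟨0, hN⟩ with hzdef
      set 𝒞₀ := 𝒞.filter (fun s => ¬ z ∈ s) with h𝒞₀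
      set 𝒞f := 𝒞.filter (fun s => z ∈ s) with h𝒞f
      set 𝒞₁ := 𝒞f.image (fun s => s.erase z) with h𝒞₁
      have hinj : Set.InjOn (fun s => Finset.erase s z) 𝒞f := fun s hs t ht hst => by
        have hzs : z ∈ s := (Finset.mem_filter.1 hs).2
        have hzt : z ∈ t := (Finset.mem_filter.1 ht).2
        rw [← Finset.insert_erase hzs, ← Finset.insert_erase hzt]
        simp only at hst
        rw [hst]
      have h𝒞₁card : 𝒞₁.card = 𝒞f.card := Finset.card_image_of_injOn hinj
      have hsplit : 𝒞₀.card + 𝒞₁.card = 𝒞.card := by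
        rw [h𝒞₁card, h𝒞₀, h𝒞f, add_comm]
        exact Finset.card_filter_add_card_filter_not _
      have h𝒞₁sized : (𝒞₁ : Set (Finset (Fin N))).Sized u' := by
        intro t ht
        obtain ⟨s, hs, rfl⟩ := Finset.mem_image.1 ht
        have hsc := h𝒞sized (Finset.mem_filter.1 hs).1
        rw [Finset.card_erase_of_mem (Finset.mem_filter.1 hs).2, hsc]
        omega
      have h𝒞₁sub : 𝒞₁ ⊆ ∂ 𝒞 := by
        intro t ht
        obtain ⟨s, hs, rfl⟩ := Finset.mem_image.1 ht
        exact Finset.mem_shadow_iff.2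
          ⟨s, (Finset.mem_filter.1 hs).1, z, (Finset.mem_filter.1 hs).2, rfl⟩
      have hz₁ : ∀ t ∈ ∂ 𝒞₁, z ∉ t := by
        intro t ht hzt
        obtain ⟨s, hs, a, _, rfl⟩ := Finset.mem_shadow_iff.1 ht
        obtain ⟨s', _, hs'e⟩ := Finset.mem_image.1 hs
        have hzmem : z ∈ s := Finset.mem_of_mem_erase hzt
        rw [← hs'e] at hzmem
        exact Finset.notMem_erase z s' hzmem
      have hS2 : (∂ 𝒞₁).image (fun t => insert z t) ⊆ ∂ 𝒞 := by
        intro t' ht'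
        obtain ⟨t, ht, rfl⟩ := Finset.mem_image.1 ht'
        obtain ⟨w, hw, hwt⟩ := Finset.mem_shadow_iff_insert_mem.1 ht
        obtain ⟨s, hs, hse⟩ := Finset.mem_image.1 hwt
        have hzs : z ∈ s := (Finset.mem_filter.1 hs).2
        apply Finset.mem_shadow_iff_insert_mem.2
        have hwz : w ≠ z := by
          intro h
          apply Finset.notMem_erase z s
          rw [hse]
          rw [← h]
          exact Finset.mem_insert_self w t
        refine ⟨w, ?_, ?_⟩
        · simp only [Finset.mem_insert, not_or]
          exact ⟨hwz, hw⟩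
        · have heq : insert w (insert z t) = s := by
            rw [Finset.insert_comm, ← hse, Finset.insert_erase hzs]
          rw [heq]; exact (Finset.mem_filter.1 hs).1
      have hdisj : Disjoint 𝒞₁ ((∂ 𝒞₁).image (fun t => insert z t)) := by
        rw [Finset.disjoint_left]
        intro t ht hti
        obtain ⟨t', _, rfl⟩ := Finset.mem_image.1 hti
        obtain ⟨s, _, hse⟩ := Finset.mem_image.1 ht
        apply Finset.notMem_erase z s
        rw [hse]
        exact Finset.mem_insert_self z t'
      have hS2card : ((∂ 𝒞₁).image (fun t => insert z t)).card = (∂ 𝒞₁).card :=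
        Finset.card_image_of_injOn (fun t ht t' ht' h => by
          have h1 := hz₁ t ht
          have h2 := hz₁ t' ht'
          rw [← Finset.erase_insert h1, ← Finset.erase_insert h2, h])
      have hkey : 𝒞₁.card + (∂ 𝒞₁).card ≤ (∂ 𝒞).card := by
        calc 𝒞₁.card + (∂ 𝒞₁).card
            = (𝒞₁ ∪ (∂ 𝒞₁).image (fun t => insert z t)).card := by
              rw [Finset.card_union_of_disjoint hdisj, hS2card]
          _ ≤ _ := Finset.card_le_card (Finset.union_subset h𝒞₁sub hS2)
      have hshift : ∂ 𝒞₀ ⊆ 𝒞₁ := by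
        intro t ht
        obtain ⟨s, hs, a, ha, rfl⟩ := Finset.mem_shadow_iff.1 ht
        have hs𝒞 : s ∈ 𝒞 := (Finset.mem_filter.1 hs).1
        have hzs : z ∉ s := by
          have := (Finset.mem_filter.1 hs).2
          simpa using this
        have haz : a ≠ z := fun h => hzs (h ▸ ha)
        have hzs' : z ∉ s.erase a := fun h => hzs (Finset.mem_of_mem_erase h)
        have hcards' : (insert z (s.erase a)).card = u'+1 := by
          rw [Finset.card_insert_of_notMem hzs', Finset.card_erase_of_mem ha, h𝒞sized hs𝒞]
          omega
        have hlt : toColex (insert z (s.erase a)) < toColex s := by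
          rw [Finset.Colex.toColex_lt_toColex_iff_exists_forall_lt]
          refine ⟨a, ha, ?_, ?_⟩
          · intro h
            rcases Finset.mem_insert.1 h with h | h
            · exact haz h
            · exact Finset.notMem_erase a s h
          · intro b hb hbs
            rcases Finset.mem_insert.1 hb with rfl | hb
            · have hb0 : (a : Fin N).val ≠ 0 := by
                intro h
                exact haz (by apply Fin.ext; simp [h, hzdef])
              exact Fin.lt_def.2 (by simpa [hzdef] using Nat.pos_of_ne_zero hb0)
            · exact absurd (Finset.mem_of_mem_erase hb) hbs
        have hs'𝒞 : insert z (s.erase a) ∈ 𝒞 := h𝒞init.2 hs𝒞 ⟨hlt, hcards'⟩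
        refine Finset.mem_image.2 ⟨insert z (s.erase a),
          Finset.mem_filter.2 ⟨hs'𝒞, Finset.mem_insert_self _ _⟩, ?_⟩
        rw [Finset.erase_insert hzs']
      obtain ⟨v, rfl⟩ : ∃ v, u' = v + 1 := ⟨u' - 1, by omega⟩
      simp only [Nat.add_sub_cancel]
      have hpas := pascal x v
      by_cases hbig : genChoose (x-1) (v+1) ≤ (𝒞₁.card : ℝ)
      · have h𝒞₁ne : 𝒞₁.Nonempty := by
          rw [← Finset.card_pos]
          by_contra h
          push_neg at h
          have h0 : (𝒞₁.card : ℝ) = 0 := by exact_mod_cast Nat.le_zero.1 h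
          have hpos : 0 < genChoose (x-1) (v+1) := genChoose_pos (by push_cast at hxr ⊢; linarith)
          rw [h0] at hbig
          linarith
        have hrec := ih (v+1) N 𝒞₁ (x-1) (by
            have hle : 𝒞₁.card ≤ 𝒜.card := by
              rw [← h𝒞card, ← hsplit]; omega
            omega)
          (by omega) h𝒞₁sized h𝒞₁ne (by push_cast at hxr ⊢; linarith) hbig
        simp only [Nat.add_sub_cancel] at hrec
        have hc1 : ((∂ 𝒞).card : ℝ) ≥ (𝒞₁.card : ℝ) + ((∂ 𝒞₁).card : ℝ) := by
          exact_mod_cast hkey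
        linarith
      · exfalso
        push_neg at hbig
        have hsplit' : (𝒞₀.card : ℝ) + (𝒞₁.card : ℝ) = (𝒜.card : ℝ) := by
          rw [← h𝒞card]; exact_mod_cast hsplit
        have h𝒞₀card : genChoose (x-1) (v+1+1) < (𝒞₀.card:ℝ) := by
          have h2 := pascal x (v+1)
          linarith
        have h𝒞₀pos : 0 < genChoose (x-1) (v+1+1) :=
          genChoose_pos (by push_cast at hxr ⊢; linarith)
        have h𝒞₀ne : 𝒞₀.Nonempty := by
          rw [← Finset.card_pos]
          by_contra h
          push_neg at h
          have h0 : (𝒞₀.card : ℝ) = 0 := by exact_mod_cast Nat.le_zero.1 h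
          linarith
        have h𝒞₁ne : 𝒞₁.Nonempty := by
          by_contra h
          rw [Finset.not_nonempty_iff_eq_empty] at h
          obtain ⟨s, hs⟩ := h𝒞₀ne
          have hssize : s.card = v+1+1 := h𝒞sized (Finset.mem_filter.1 hs).1
          have hsne : s.Nonempty := Finset.card_pos.1 (by omega)
          obtain ⟨a, ha⟩ := hsne
          have : s.erase a ∈ 𝒞₁ := hshift (Finset.mem_shadow_iff.2 ⟨s, hs, a, ha, rfl⟩)
          rw [h] at this
          exact absurd this (Finset.notMem_empty _)
        have h𝒞₀sized : (𝒞₀ : Set (Finset (Fin N))).Sized (v+1+1) :=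
          fun s hs => h𝒞sized (Finset.mem_filter.1 hs).1
        have hmeas : (v+1+1) + 𝒞₀.card ≤ M := by
          have h1 : 1 ≤ 𝒞₁.card := Finset.card_pos.2 h𝒞₁ne
          have h2 : 𝒞₀.card + 𝒞₁.card = 𝒜.card := by rw [← h𝒞card]; exact hsplit
          omega
        have hrec := ih (v+1+1) N 𝒞₀ (x-1) hmeas (by omega) h𝒞₀sized h𝒞₀ne
          (by push_cast at hxr ⊢; linarith) h𝒞₀card.le
        have hrec' : genChoose (x-1) (v+1) ≤ ((∂ 𝒞₀).card : ℝ) := by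
          convert hrec using 2; omega
        have hle : (∂ 𝒞₀).card ≤ 𝒞₁.card := Finset.card_le_card hshift
        have hle' : ((∂ 𝒞₀).card : ℝ) ≤ (𝒞₁.card : ℝ) := by exact_mod_cast hle
        linarith [hrec']

end KKaux3

namespace KKaux4
open KKaux KKaux2 KKaux3 FinsetFamily Finset

lemma shadow_biUnion {N r j : ℕ} (𝒜 : Finset (Finset (Fin N)))
    (h : (𝒜 : Set (Finset (Fin N))).Sized r) (hj : j < r) :
    ∂ (𝒜.biUnion (fun A => A.powersetCard (j+1))) = 𝒜.biUnion (fun A => A.powersetCard j) := by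
  classical
  ext t
  constructor
  · intro ht
    obtain ⟨s, hs, a, ha, rfl⟩ := mem_shadow_iff.1 ht
    obtain ⟨A, hA, hsA⟩ := mem_biUnion.1 hs
    rw [mem_powersetCard] at hsA
    exact mem_biUnion.2 ⟨A, hA, mem_powersetCard.2
      ⟨(erase_subset a s).trans hsA.1, by rw [card_erase_of_mem ha, hsA.2]; omega⟩⟩
      
  · intro ht
    obtain ⟨A, hA, htA⟩ := mem_biUnion.1 ht
    rw [mem_powersetCard] at htA
    have hAne : (A \ t).Nonempty := by
      rw [← card_pos, card_sdiff_of_subset htA.1, h hA, htA.2]; omega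
    obtain ⟨a, ha⟩ := hAne
    rw [mem_sdiff] at ha
    apply mem_shadow_iff_insert_mem.2
    exact ⟨a, ha.2, mem_biUnion.2 ⟨A, hA, mem_powersetCard.2
      ⟨insert_subset ha.1 htA.1, by rw [card_insert_of_notMem ha.2, htA.2]⟩⟩⟩

lemma realKK_iter {N r : ℕ} (𝒜 : Finset (Finset (Fin N))) (x : ℝ)
    (hsized : (𝒜 : Set (Finset (Fin N))).Sized r) (hne : 𝒜.Nonempty) (hx : (r:ℝ) - 1 ≤ x)
    (hcard : genChoose x r ≤ (𝒜.card:ℝ)) :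
    ∀ j, j ≤ r → genChoose x j ≤ ((𝒜.biUnion (fun A => A.powersetCard j)).card : ℝ) := by
  classical
  have hBsized : ∀ j, ((𝒜.biUnion (fun A => A.powersetCard j) : Finset (Finset (Fin N))) :
      Set (Finset (Fin N))).Sized j := by
    intro j t ht
    obtain ⟨A, _, htA⟩ := mem_biUnion.1 ht
    exact (mem_powersetCard.1 htA).2
  have hBne : ∀ j, j ≤ r → (𝒜.biUnion (fun A => A.powersetCard j)).Nonempty := by
    intro j hj
    obtain ⟨A, hA⟩ := hne
    have : (A.powersetCard j).Nonempty := by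
      rw [Finset.powersetCard_nonempty]
      rw [hsized hA]; exact hj
    obtain ⟨t, htt⟩ := this
    exact ⟨t, mem_biUnion.2 ⟨A, hA, htt⟩⟩
  have hbase : 𝒜.biUnion (fun A => A.powersetCard r) = 𝒜 := by
    ext t
    rw [mem_biUnion]
    constructor
    · rintro ⟨A, hA, htA⟩
      rw [mem_powersetCard] at htA
      have : t = A := Finset.eq_of_subset_of_card_le htA.1 (by rw [hsized hA, htA.2])
      rwa [this]
    · intro ht
      exact ⟨t, ht, by rw [mem_powersetCard]; exact ⟨Finset.Subset.refl t, hsized ht⟩⟩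
  suffices H : ∀ d j, j + d = r → genChoose x j ≤
      ((𝒜.biUnion (fun A => A.powersetCard j)).card : ℝ) by
    intro j hj
    exact H (r - j) j (by omega)
  intro d
  induction d with
  | zero =>
    intro j hj
    simp only [Nat.add_zero] at hj
    subst hj
    rw [hbase]
    exact hcard
  | succ d ihd =>
    intro j hj
    have hj1 : (j+1) + d = r := by omega
    have hIH := ihd (j+1) hj1
    have hrec := realKK ((j+1) + (𝒜.biUnion (fun A => A.powersetCard (j+1))).card)
      (j+1) N (𝒜.biUnion (fun A => A.powersetCard (j+1))) x le_rfl (by omega)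
      (hBsized (j+1)) (hBne (j+1) (by omega))
      (by
        have : (j:ℝ) ≤ (r:ℝ) - 1 := by
          have : (j:ℝ) + 1 ≤ (r:ℝ) := by exact_mod_cast Nat.le_of_lt_succ (by omega)
          linarith
        push_cast
        linarith [hx])
      hIH
    simp only [Nat.add_sub_cancel] at hrec
    rwa [shadow_biUnion 𝒜 hsized (by omega)] at hrec

end KKaux4

namespace KKaux5
open KKaux KKaux2 KKaux3 KKaux4 Finset

def toFin (n : ℕ) (A : Finset ℕ) : Finset (Fin (n+1)) :=
  (A.filter (· < n+1)).attachFin (fun m hm => (Finset.mem_filter.1 hm).2)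

lemma mem_toFin {n : ℕ} {A : Finset ℕ} {a : Fin (n+1)} :
    a ∈ toFin n A ↔ (a : ℕ) ∈ A := by
  simp [toFin, Finset.mem_attachFin, Finset.mem_filter, a.isLt, a.is_le]

lemma toFin_map_val {n : ℕ} {A : Finset ℕ} (hA : ∀ a ∈ A, a < n+1) :
    (toFin n A).map Fin.valEmbedding = A := by
  ext b
  simp only [Finset.mem_map, Fin.valEmbedding_apply]
  constructor
  · rintro ⟨a, ha, rfl⟩
    exact mem_toFin.1 ha
  · intro hb
    exact ⟨⟨b, hA b hb⟩, mem_toFin.2 hb, rfl⟩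

lemma toFin_card {n : ℕ} {A : Finset ℕ} (hA : ∀ a ∈ A, a < n+1) :
    (toFin n A).card = A.card := by
  conv_rhs => rw [← toFin_map_val hA]
  rw [Finset.card_map]

lemma levShadow_eq {n j : ℕ} (G : Finset (Finset ℕ)) (hG : ∀ A ∈ G, ∀ a ∈ A, a < n+1) :
    levShadow j G =
      ((G.image (toFin n)).biUnion (fun B => B.powersetCard j)).map
        (Finset.mapEmbedding Fin.valEmbedding).toEmbedding := by
  classical
  ext t
  simp only [levShadow, Finset.mem_biUnion, Finset.mem_map, Finset.mem_powersetCard,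
    Finset.mem_image]
  constructor
  · rintro ⟨A, hA, htA, htc⟩
    refine ⟨toFin n t, ⟨toFin n A, ⟨A, hA, rfl⟩, ?_, ?_⟩, ?_⟩
    · intro a ha
      exact mem_toFin.2 (htA (mem_toFin.1 ha))
    · rw [toFin_card (fun a ha => hG A hA a (htA ha))]; exact htc
    · show (toFin n t).map Fin.valEmbedding = t
      exact toFin_map_val (fun a ha => hG A hA a (htA ha))
  · rintro ⟨s, ⟨B, ⟨A, hA, rfl⟩, hsB, hsc⟩, rfl⟩
    show ∃ a ∈ G, s.map Fin.valEmbedding ⊆ a ∧ #(s.map Fin.valEmbedding) = j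
    refine ⟨A, hA, ?_, by rw [Finset.card_map, hsc]⟩
    intro b hb
    obtain ⟨a, ha, rfl⟩ := Finset.mem_map.1 hb
    exact mem_toFin.1 (hsB ha)

lemma toFin_injOn {n : ℕ} (G : Finset (Finset ℕ)) (hG : ∀ A ∈ G, ∀ a ∈ A, a < n+1) :
    Set.InjOn (toFin n) G := by
  intro A hA B hB h
  rw [← toFin_map_val (hG A hA), ← toFin_map_val (hG B hB), h]

end KKaux5

namespace KKaux6
open KKaux KKaux2 KKaux3 KKaux4 KKaux5 Finset

lemma genChoose_succ (x : ℝ) (s : ℕ) :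
    genChoose x (s+1) = genChoose x s * ((x - s)/((s:ℝ)+1)) := by
  rw [genChoose, genChoose, Finset.prod_range_succ, Nat.factorial_succ]
  push_cast
  rw [div_mul_div_comm, mul_comm ((s:ℝ)+1) (s.factorial : ℝ)]

lemma genChoose_add (x : ℝ) (j d : ℕ) :
    genChoose x (j+d) = genChoose x j * ∏ t ∈ Finset.range d, ((x - (j+t))/(((j:ℝ)+t)+1)) := by
  induction d with
  | zero => simp
  | succ d ih =>
    rw [← Nat.add_assoc, genChoose_succ, ih, Finset.prod_range_succ]
    push_cast
    ring

lemma levShadow_card_ge {n r j : ℕ} (G : Finset (Finset ℕ)) (x : ℝ)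
    (hG : ∀ A ∈ G, ∀ a ∈ A, a < n+1)
    (hsized : ∀ A ∈ G, A.card = r) (hne : G.Nonempty)
    (hx : (r:ℝ) - 1 ≤ x) (hcard : genChoose x r ≤ (G.card:ℝ)) (hj : j ≤ r) :
    genChoose x j ≤ (((levShadow j G)).card : ℝ) := by
  classical
  set G' := G.image (toFin n) with hG'
  have hG'card : G'.card = G.card := Finset.card_image_of_injOn (toFin_injOn G hG)
  have hG'sized : (G' : Set (Finset (Fin (n+1)))).Sized r := by
    intro B hB
    obtain ⟨A, hA, rfl⟩ := Finset.mem_image.1 hB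
    rw [toFin_card (hG A hA)]
    exact hsized A hA
  have hG'ne : G'.Nonempty := hne.image _
  have h := realKK_iter G' x hG'sized hG'ne hx (by rw [hG'card]; exact hcard) j hj
  rw [levShadow_eq G hG, Finset.card_map]
  exact h

end KKaux6

namespace KKaux7
open KKaux KKaux2 KKaux6 Finset

lemma harmonic_ge (k M : ℕ) (hk : 0 < k) :
    Real.log ((k:ℝ) + M) - Real.log k ≤ ∑ t ∈ Finset.range M, 1/((k:ℝ)+t) := by
  have key : ∀ t : ℕ, Real.log ((k:ℝ)+(t+1)) - Real.log ((k:ℝ)+t) ≤ 1/((k:ℝ)+t) := by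
    intro t
    have hpos : (0:ℝ) < (k:ℝ)+t := by positivity
    have h1 : Real.log (((k:ℝ)+t+1)/((k:ℝ)+t)) ≤ ((k:ℝ)+t+1)/((k:ℝ)+t) - 1 :=
      Real.log_le_sub_one_of_pos (by positivity)
    rw [Real.log_div (by positivity) (ne_of_gt hpos)] at h1
    have h2 : ((k:ℝ)+t+1)/((k:ℝ)+t) - 1 = 1/((k:ℝ)+t) := by field_simp; ring
    rw [h2] at h1
    convert h1 using 3
    push_cast; ring
  have htel : ∑ t ∈ Finset.range M,
      (Real.log ((k:ℝ)+(t+1)) - Real.log ((k:ℝ)+t)) = Real.log ((k:ℝ)+M) - Real.log k := by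
    have := Finset.sum_range_sub (f := fun t => Real.log ((k:ℝ)+t)) M
    simp only [Nat.cast_zero, add_zero] at this
    convert this using 2
    push_cast; ring_nf
  rw [← htel]
  exact Finset.sum_le_sum (fun t _ => key t)

lemma log_k_ge {k : ℕ} (hk : 50 ≤ k) : (3.465:ℝ) ≤ Real.log k := by
  have h2 : (0.6931471803:ℝ) < Real.log 2 := Real.log_two_gt_d9
  have h32 : Real.log 32 ≤ Real.log k := by
    apply Real.log_le_log (by norm_num)
    exact_mod_cast (by omega : 32 ≤ k)
  have h32' : Real.log 32 = 5 * Real.log 2 := by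
    rw [show (32:ℝ) = 2^5 by norm_num, Real.log_pow]
    norm_num
  rw [h32'] at h32
  linarith

lemma exp5_lt : Real.exp 5 < 149 := by
  have h := Real.exp_one_lt_d9
  have h5 : Real.exp 5 = Real.exp 1 ^ 5 := by
    rw [← Real.exp_nat_mul]; norm_num
  rw [h5]
  calc Real.exp 1 ^ 5 < 2.7182818286 ^ 5 := by
        apply pow_lt_pow_left₀ h (Real.exp_pos 1).le (by norm_num)
    _ < 149 := by norm_num

lemma ratio_bound {n k : ℕ} {x : ℝ} (hk : 50 ≤ k) (hn : 50 * k * Real.log k ≤ (n : ℝ))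
    (hx1 : ((n : ℝ) - k - 1) ≤ x) (hx2 : x ≤ (n : ℝ) - Real.log k) :
    genChoose x (n - k - 1) / genChoose x (k - 1) < 1 / (k : ℝ) ^ 2 := by
  set r := Real.log k with hrdef
  have hk50 : (50:ℝ) ≤ (k:ℝ) := by exact_mod_cast hk
  have hkpos : (0:ℝ) < (k:ℝ) := by linarith
  have hr35 : (3.465:ℝ) ≤ r := log_k_ge hk
  have hn173 : (173:ℝ) * k ≤ (n:ℝ) := by nlinarith
  have hn3k : 3*k + 2 ≤ n := by
    have h : ((3*k+2:ℕ):ℝ) ≤ (n:ℝ) := by push_cast; linarith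
    exact_mod_cast h
  set j := k - 1 with hjdef
  set m := n - k - 1 with hmdef
  set M := m - j with hMdef
  have hjc : ((j:ℕ):ℝ) = (k:ℝ) - 1 := by
    rw [hjdef, Nat.cast_sub (by omega)]; norm_num
  have hmc : ((m:ℕ):ℝ) = (n:ℝ) - k - 1 := by
    rw [hmdef, Nat.sub_sub, Nat.cast_sub (by omega)]; push_cast; ring
  have hjm : j ≤ m := by omega
  have hMc : ((M:ℕ):ℝ) = (n:ℝ) - 2*k := by
    rw [hMdef, Nat.cast_sub hjm, hmc, hjc]; ring
  have hM1 : 1 ≤ M := by omega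
  have hjM : j + M = m := by omega
  -- positivity of genChoose x j
  have cj : 0 < genChoose x j := by
    apply genChoose_pos
    rw [hjc]
    linarith
  -- ratio as a product
  have hratio : genChoose x m / genChoose x j =
      ∏ t ∈ Finset.range M, ((x - ((j:ℝ)+t))/(((j:ℝ)+t)+1)) := by
    rw [← hjM, genChoose_add]
    exact mul_div_cancel_left₀ _ cj.ne'
  -- reflect the numerator
  have hreflect : ∏ t ∈ Finset.range M, (x - ((j:ℝ)+(t:ℝ))) =
      ∏ t ∈ Finset.range M, (x - (j:ℝ) - ((M:ℝ)-1-(t:ℝ))) := by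
    have e1 : ∏ t ∈ Finset.range M, (x - ((j:ℝ)+(t:ℝ))) =
        ∏ t ∈ Finset.range M, (x - (j:ℝ) - (t:ℝ)) :=
      Finset.prod_congr rfl (fun t _ => by ring)
    rw [e1, ← Finset.prod_range_reflect (fun t => x - (j:ℝ) - (t:ℝ)) M]
    apply Finset.prod_congr rfl
    intro t ht
    have ht' := Finset.mem_range.1 ht
    have hcast : ((M - 1 - t : ℕ):ℝ) = (M:ℝ)-1-(t:ℝ) := by
      rw [Nat.sub_sub, Nat.cast_sub (by omega)]
      push_cast; ring
    rw [hcast]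
  have hP2 : genChoose x m / genChoose x j =
      ∏ t ∈ Finset.range M, ((x - (j:ℝ) - ((M:ℝ)-1-(t:ℝ)))/(((j:ℝ)+t)+1)) := by
    rw [hratio, Finset.prod_div_distrib, Finset.prod_div_distrib, hreflect]
  -- bound each factor by an exponential
  have hfac : ∀ t ∈ Finset.range M,
      (x - (j:ℝ) - ((M:ℝ)-1-(t:ℝ)))/(((j:ℝ)+t)+1) ≤
        Real.exp (-((r-2) * (1/((k:ℝ)+t)))) := by
    intro t ht
    have hden : ((j:ℝ)+t)+1 = (k:ℝ)+t := by rw [hjc]; ring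
    have hdenpos : (0:ℝ) < (k:ℝ)+t := by positivity
    have hnum : x - (j:ℝ) - ((M:ℝ)-1-(t:ℝ)) ≤ (k:ℝ)+2-r+t := by
      rw [hjc, hMc]; linarith
    have step1 : (x - (j:ℝ) - ((M:ℝ)-1-(t:ℝ)))/(((j:ℝ)+t)+1) ≤
        ((k:ℝ)+2-r+t)/((k:ℝ)+t) := by
      rw [hden]
      exact div_le_div_of_nonneg_right hnum hdenpos.le
    have step2 : ((k:ℝ)+2-r+t)/((k:ℝ)+t) = (-((r-2) * (1/((k:ℝ)+t)))) + 1 := by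
      field_simp
      ring
    calc (x - (j:ℝ) - ((M:ℝ)-1-(t:ℝ)))/(((j:ℝ)+t)+1) ≤ ((k:ℝ)+2-r+t)/((k:ℝ)+t) := step1
      _ = (-((r-2) * (1/((k:ℝ)+t)))) + 1 := step2
      _ ≤ Real.exp (-((r-2) * (1/((k:ℝ)+t)))) := Real.add_one_le_exp _
  have hfacpos : ∀ t ∈ Finset.range M,
      (0:ℝ) ≤ (x - (j:ℝ) - ((M:ℝ)-1-(t:ℝ)))/(((j:ℝ)+t)+1) := by
    intro t ht
    apply div_nonneg
    · rw [hjc, hMc]; linarith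
    · rw [hjc]; push_cast; linarith [Nat.cast_nonneg (α := ℝ) t]
  -- putting the product together
  set H := ∑ t ∈ Finset.range M, 1/((k:ℝ)+t) with hHdef
  have hprod : genChoose x m / genChoose x j ≤ Real.exp (-(r-2) * H) := by
    rw [hP2]
    calc ∏ t ∈ Finset.range M, ((x - (j:ℝ) - ((M:ℝ)-1-(t:ℝ)))/(((j:ℝ)+t)+1))
        ≤ ∏ t ∈ Finset.range M, Real.exp (-((r-2) * (1/((k:ℝ)+t)))) :=
          Finset.prod_le_prod hfacpos hfac
      _ = Real.exp (∑ t ∈ Finset.range M, (-((r-2) * (1/((k:ℝ)+t))))) :=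
          (Real.exp_sum _ _).symm
      _ = Real.exp (-(r-2) * H) := by
          congr 1
          rw [Finset.sum_neg_distrib, ← Finset.mul_sum, hHdef, neg_mul]
  have hH : Real.log ((k:ℝ)+M) - Real.log (k:ℝ) ≤ H := harmonic_ge k M (by omega)
  have hkM : (k:ℝ)+M = (n:ℝ)-k := by rw [hMc]; ring
  set L := Real.log ((n:ℝ)-k) - Real.log (k:ℝ) with hLdef
  have hHL : L ≤ H := by rw [hLdef, ← hkM]; exact hH
  have hr2 : (0:ℝ) < r - 2 := by norm_num at hr35 ⊢; linarith
  have hnk_pos : (0:ℝ) < (n:ℝ)-k := by linarith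
  have h50r : (0:ℝ) < 50*r - 1 := by norm_num at hr35 ⊢; linarith
  have hnk_ge : (k:ℝ) * (50*r-1) ≤ (n:ℝ)-k := by nlinarith
  have hlogsplit : Real.log ((k:ℝ)*(50*r-1)) = Real.log (k:ℝ) + Real.log (50*r-1) :=
    Real.log_mul (ne_of_gt hkpos) (ne_of_gt h50r)
  have hlmono : Real.log ((k:ℝ)*(50*r-1)) ≤ Real.log ((n:ℝ)-k) :=
    Real.log_le_log (by positivity) hnk_ge
  have hlog50r : (5:ℝ) ≤ Real.log (50*r-1) := by
    rw [Real.le_log_iff_exp_le h50r]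
    have h149 := exp5_lt
    norm_num at hr35 ⊢
    linarith
  have hL5 : (5:ℝ) ≤ L := by
    rw [hLdef]
    rw [hlogsplit] at hlmono
    linarith
  have hfinal : Real.exp (-(r-2) * H) < 1/(k:ℝ)^2 := by
    have h1 : Real.exp (-(r-2)*H) ≤ Real.exp (-(r-2)*L) := by
      apply Real.exp_le_exp.2
      nlinarith [mul_le_mul_of_nonneg_left hHL hr2.le]
    have h2 : Real.exp (-(r-2)*L) < Real.exp (-(2*r)) := by
      apply Real.exp_lt_exp.2
      have hint := mul_le_mul_of_nonneg_left hL5 hr2.le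
      norm_num at hr35
      nlinarith
    have h3 : Real.exp (-(2*r)) = 1/(k:ℝ)^2 := by
      rw [hrdef, Real.exp_neg]
      rw [show (2:ℝ)*Real.log (k:ℝ) = Real.log (k:ℝ) + Real.log (k:ℝ) by ring, Real.exp_add,
        Real.exp_log hkpos]
      rw [pow_two, one_div]
    linarith
  calc genChoose x m / genChoose x j ≤ Real.exp (-(r-2)*H) := hprod
    _ < 1/(k:ℝ)^2 := hfinal

end KKaux7

theorem stmt14 (n k : ℕ) (hk : 50 ≤ k) (hn : 50 * k * Real.log k ≤ (n : ℝ))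
    (G : Finset (Finset ℕ)) (hG : G ⊆ (Finset.Icc 2 n).powersetCard (n - k - 1))
    (hne : G.Nonempty)
    (x : ℝ) (hx1 : ((n : ℝ) - k - 1) ≤ x) (hx2 : x ≤ (n : ℝ) - Real.log k)
    (hcard : (G.card : ℝ) = genChoose x (n - k - 1)) :
    (G.card : ℝ) / ((levShadow (k - 1) G).card : ℝ) ≤
        genChoose x (n - k - 1) / genChoose x (k - 1) ∧
      genChoose x (n - k - 1) / genChoose x (k - 1) < 1 / (k : ℝ) ^ 2 := by
  have hk50 : (50:ℝ) ≤ (k:ℝ) := by exact_mod_cast hk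
  have hkpos : (0:ℝ) < (k:ℝ) := by linarith
  have hr35 : (3.465:ℝ) ≤ Real.log k := KKaux7.log_k_ge hk
  have hn173 : (173:ℝ) * k ≤ (n:ℝ) := by nlinarith
  have hn3k : 3*k + 2 ≤ n := by
    have h : ((3*k+2:ℕ):ℝ) ≤ (n:ℝ) := by push_cast; linarith
    exact_mod_cast h
  have hmc : ((n-k-1:ℕ):ℝ) = (n:ℝ) - k - 1 := by
    rw [Nat.sub_sub, Nat.cast_sub (by omega)]; push_cast; ring
  have hjc : ((k-1:ℕ):ℝ) = (k:ℝ) - 1 := by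
    rw [Nat.cast_sub (by omega)]; norm_num
  have hmem : ∀ A ∈ G, ∀ a ∈ A, a < n+1 := by
    intro A hA a ha
    have h1 := (Finset.mem_powersetCard.1 (hG hA)).1 ha
    have h2 := (Finset.mem_Icc.1 h1).2
    omega
  have hsz : ∀ A ∈ G, A.card = n-k-1 := fun A hA => (Finset.mem_powersetCard.1 (hG hA)).2
  have hshadow := KKaux6.levShadow_card_ge (n := n) (r := n-k-1) (j := k-1) G x hmem hsz hne
    (by rw [hmc]; linarith) (le_of_eq hcard.symm) (by omega)
  have cj : 0 < genChoose x (k-1) := KKaux.genChoose_pos (by rw [hjc]; linarith)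
  have cm : 0 ≤ genChoose x (n-k-1) := KKaux.genChoose_nonneg (by rw [hmc]; linarith)
  constructor
  · rw [hcard]
    exact div_le_div_of_nonneg_left cm cj hshadow
  · exact KKaux7.ratio_bound hk hn hx1 hx2
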